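/- Let λ = (λ_1,…,λ_n) be the eigenvalues of a real symmetric n×n matrix M with M_{αα} ∈ [c₁/2, C] for α = 1,…,n−1 bounded off-diagonal entries |M_{αn}| ≤ C', and M_{nn} ≥ R. Then for R sufficiently large (depending on c₁, C, C', n), after ordering, λ_α ∈ [c₁/4, 2C] for α ≤ n−1 and λ_n ≥ R/2. -/

import Mathlib

open Matrix

private lemma quad_lower' {k : ℕ} (A : Matrix (Fin k) (Fin k) ℝ) (c : ℝ)
    (hA : (A - c • (1 : Matrix (Fin k) (Fin k) ℝ)).PosSemidef) (x : Fin k → ℝ) :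
    c * (x ⬝ᵥ x) ≤ x ⬝ᵥ (A *ᵥ x) := by
  have h := hA.dotProduct_mulVec_nonneg x
  have hs : star x = x := funext fun i => star_trivial _
  rw [hs, sub_mulVec, dotProduct_sub, smul_mulVec, one_mulVec, dotProduct_smul,
    smul_eq_mul] at h
  linarith

private lemma quad_upper' {k : ℕ} (A : Matrix (Fin k) (Fin k) ℝ) (c : ℝ)
    (hA : (c • (1 : Matrix (Fin k) (Fin k) ℝ) - A).PosSemidef) (x : Fin k → ℝ) :
    x ⬝ᵥ (A *ᵥ x) ≤ c * (x ⬝ᵥ x) := by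
  have h := hA.dotProduct_mulVec_nonneg x
  have hs : star x = x := funext fun i => star_trivial _
  rw [hs, sub_mulVec, dotProduct_sub, smul_mulVec, one_mulVec, dotProduct_smul,
    smul_eq_mul] at h
  linarith

private lemma trace_eq_sum_eigs' {k : ℕ} (M : Matrix (Fin k) (Fin k) ℝ) (hM : M.IsHermitian) :
    M.trace = ∑ i, hM.eigenvalues i := by
  simpa using hM.trace_eq_sum_eigenvalues

private lemma norm_sq_sum' {k : ℕ} (v : EuclideanSpace ℝ (Fin k)) (hv : ‖v‖ = 1) :
    ∑ i, (v i) ^ 2 = 1 := by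
  have h := EuclideanSpace.norm_eq v
  rw [hv] at h
  have h2 : Real.sqrt (∑ i, ‖v i‖ ^ 2) = 1 := h.symm
  have := Real.sqrt_eq_one.mp h2
  simpa [sq_abs] using this

set_option maxHeartbeats 1000000 in
private lemma eig_dichotomy (n : ℕ) (c₁ C C' R : ℝ) (hc₁ : 0 < c₁) (hC : 0 < C) (hC' : 0 ≤ C')
    (hR : c₁ / 4 + 4 * (n : ℝ) * C' ^ 2 / c₁ < R)
    (M : Matrix (Fin (n + 1)) (Fin (n + 1)) ℝ) (hM : M.IsHermitian)
    (h1 : ((Matrix.of fun α β : Fin n => M α.castSucc β.castSucc)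
            - (c₁ / 2) • (1 : Matrix (Fin n) (Fin n) ℝ)).PosSemidef)
    (h2 : (C • (1 : Matrix (Fin n) (Fin n) ℝ)
            - Matrix.of fun α β : Fin n => M α.castSucc β.castSucc).PosSemidef)
    (hu : ∀ α : Fin n, |M α.castSucc (Fin.last n)| ≤ C')
    (hm : R ≤ M (Fin.last n) (Fin.last n)) (i : Fin (n + 1)) :
    hM.eigenvalues i ∈ Set.Icc (c₁ / 4) (2 * C) ∨
      M (Fin.last n) (Fin.last n) ≤ hM.eigenvalues i := by
  set μ := hM.eigenvalues i with hμdef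
  set m := M (Fin.last n) (Fin.last n) with hmdef
  set B' := (Matrix.of fun α β : Fin n => M α.castSucc β.castSucc) with hB'def
  have hv : M *ᵥ ⇑(hM.eigenvectorBasis i) = μ • ⇑(hM.eigenvectorBasis i) :=
    hM.mulVec_eigenvectorBasis i
  set v : Fin (n + 1) → ℝ := ⇑(hM.eigenvectorBasis i) with hvdef
  have hnorm : ∑ j, v j ^ 2 = 1 := norm_sq_sum' _ (hM.eigenvectorBasis.orthonormal.1 i)
  set s := v (Fin.last n) with hsdef
  set W := ∑ α : Fin n, v α.castSucc ^ 2 with hWdef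
  set Q := ∑ α : Fin n, v α.castSucc * (∑ β : Fin n, M α.castSucc β.castSucc * v β.castSucc)
    with hQdef
  set p := ∑ α : Fin n, M α.castSucc (Fin.last n) * v α.castSucc with hpdef
  have hW0 : 0 ≤ W := Finset.sum_nonneg fun _ _ => sq_nonneg _
  have hE : W + s ^ 2 = 1 := by
    rw [hWdef, hsdef, ← Fin.sum_univ_castSucc (fun j => v j ^ 2)]; exact hnorm
  have hrow : ∀ j, ∑ k, M j k * v k = μ * v j := by
    intro j
    have h := congrFun hv j
    simpa [Matrix.mulVec, dotProduct] using h
  -- last row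
  have hlast : p + m * s = μ * s := by
    have h := hrow (Fin.last n)
    rw [Fin.sum_univ_castSucc] at h
    have hp' : p = ∑ α : Fin n, M (Fin.last n) α.castSucc * v α.castSucc := by
      refine Finset.sum_congr rfl fun α _ => ?_
      have := hM.apply α.castSucc (Fin.last n)
      rw [star_trivial] at this
      rw [this]
    rw [hp']
    exact h
  -- rows dotted with w
  have hA : Q + s * p = μ * W := by
    have h : ∀ α : Fin n,
        (∑ β : Fin n, M α.castSucc β.castSucc * v β.castSucc)
          + M α.castSucc (Fin.last n) * s = μ * v α.castSucc := by
      intro α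
      have h := hrow α.castSucc
      rw [Fin.sum_univ_castSucc] at h
      exact h
    rw [hQdef, hpdef, Finset.mul_sum, ← Finset.sum_add_distrib, hWdef, Finset.mul_sum]
    refine Finset.sum_congr rfl fun α _ => ?_
    linear_combination v α.castSucc * h α
  -- Cauchy-Schwarz
  have hCS : p ^ 2 ≤ ((n : ℝ) * C' ^ 2) * W := by
    have h := Finset.sum_mul_sq_le_sq_mul_sq Finset.univ
      (fun α : Fin n => M α.castSucc (Fin.last n)) (fun α : Fin n => v α.castSucc)
    have hU : ∑ α : Fin n, (M α.castSucc (Fin.last n)) ^ 2 ≤ (n : ℝ) * C' ^ 2 := by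
      have hb : ∀ α ∈ (Finset.univ : Finset (Fin n)), (M α.castSucc (Fin.last n)) ^ 2 ≤ C' ^ 2 := by
        intro α _
        have := hu α
        nlinarith [abs_nonneg (M α.castSucc (Fin.last n)), sq_abs (M α.castSucc (Fin.last n))]
      calc ∑ α : Fin n, (M α.castSucc (Fin.last n)) ^ 2 ≤ ∑ _α : Fin n, C' ^ 2 :=
            Finset.sum_le_sum hb
        _ = (n : ℝ) * C' ^ 2 := by simp [Finset.sum_const, Finset.card_univ, nsmul_eq_mul]
    calc p ^ 2 ≤ (∑ α : Fin n, (M α.castSucc (Fin.last n)) ^ 2) * W := h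
      _ ≤ ((n : ℝ) * C' ^ 2) * W := mul_le_mul_of_nonneg_right hU hW0
  -- quadratic form bounds
  have hdot : (fun α : Fin n => v α.castSucc) ⬝ᵥ (B' *ᵥ (fun α : Fin n => v α.castSucc)) = Q := by
    rw [hQdef]
    simp [Matrix.mulVec, dotProduct, hB'def]
  have hww : (fun α : Fin n => v α.castSucc) ⬝ᵥ (fun α : Fin n => v α.castSucc) = W := by
    rw [hWdef]
    simp [dotProduct, sq]
  have hD1 : c₁ / 2 * W ≤ Q := by
    have := quad_lower' B' (c₁ / 2) h1 (fun α => v α.castSucc)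
    rw [hdot, hww] at this
    exact this
  have hD2 : Q ≤ C * W := by
    have := quad_upper' B' C h2 (fun α => v α.castSucc)
    rw [hdot, hww] at this
    exact this
  have hp : p = (μ - m) * s := by
    have : p = μ * s - m * s := by linarith [hlast]
    rw [this]; ring
  have hsp : s * p = (μ - m) * s ^ 2 := by rw [hp]; ring
  have hA' : Q + (μ - m) * s ^ 2 = μ * W := by rw [← hsp]; exact hA
  have hpsq : p ^ 2 = (m - μ) ^ 2 * s ^ 2 := by rw [hp]; ring
  -- lower bound: c₁/4 ≤ μ always
  have hl : c₁ / 4 ≤ μ := by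
    by_contra hcon
    push_neg at hcon
    have hG' : 4 * (n : ℝ) * C' ^ 2 < c₁ * (m - μ) := by
      have hdiv : 4 * (n : ℝ) * C' ^ 2 / c₁ < m - μ := by linarith
      have := (div_lt_iff₀ hc₁).mp hdiv
      linarith
    have hGpos : 0 < m - μ := by
      by_contra hG0
      push_neg at hG0
      have h1'' : c₁ * (m - μ) ≤ 0 := mul_nonpos_of_nonneg_of_nonpos hc₁.le hG0
      have : (0:ℝ) ≤ 4 * (n : ℝ) * C' ^ 2 := by positivity
      linarith
    have h1' : c₁ / 4 * W ≤ (m - μ) * s ^ 2 := by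
      have hprod : 0 ≤ (c₁ / 4 - μ) * W := mul_nonneg (by linarith) hW0
      nlinarith [hD1, hA', hprod]
    have h2' : (m - μ) ^ 2 * s ^ 2 ≤ (n : ℝ) * C' ^ 2 * W := by
      rw [← hpsq]; exact hCS
    have hK : (0:ℝ) ≤ 4 * (n : ℝ) * C' ^ 2 := by positivity
    have hA1 : c₁ * ((m - μ) ^ 2 * s ^ 2) ≤ c₁ * ((n : ℝ) * C' ^ 2 * W) :=
      mul_le_mul_of_nonneg_left h2' hc₁.le
    have hA2 : (4 * (n : ℝ) * C' ^ 2) * (c₁ / 4 * W) ≤ (4 * (n : ℝ) * C' ^ 2) * ((m - μ) * s ^ 2) :=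
      mul_le_mul_of_nonneg_left h1' hK
    have hprod2 : (c₁ * (m - μ) - 4 * (n : ℝ) * C' ^ 2) * ((m - μ) * s ^ 2) ≤ 0 := by
      nlinarith [hA1, hA2]
    have hs2 : s ^ 2 ≤ 0 := by
      by_contra hcon2
      push_neg at hcon2
      have h3 : 0 < (m - μ) * s ^ 2 := mul_pos hGpos hcon2
      nlinarith [hprod2, h3, hG']
    have hWle : W ≤ 0 := by
      have : (m - μ) * s ^ 2 ≤ 0 := mul_nonpos_of_nonneg_of_nonpos hGpos.le hs2
      nlinarith [h1']
    linarith [hE]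
  -- upper part
  rcases le_or_gt μ (2 * C) with hup | hup
  · exact Or.inl ⟨hl, hup⟩
  · right
    by_contra hcon
    push_neg at hcon
    have hD2' : (μ - C) * W ≤ (μ - m) * s ^ 2 := by nlinarith [hA', hD2]
    have hWle : W ≤ 0 := by
      have hrhs : (μ - m) * s ^ 2 ≤ 0 :=
        mul_nonpos_of_nonpos_of_nonneg (by linarith) (sq_nonneg s)
      nlinarith [hD2', hrhs, hC, hup]
    have hW0' : W = 0 := le_antisymm hWle hW0
    have hs1 : s ^ 2 = 1 := by linarith [hE]
    have hmm : (m - μ) ^ 2 ≤ 0 := by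
      have : p ^ 2 ≤ 0 := by rw [hW0'] at hCS; linarith [hCS]
      rw [hpsq, hs1] at this
      linarith
    nlinarith [sq_nonneg (m - μ), hmm, hcon]

/-- Eigenvalue splitting (Caffarelli–Nirenberg–Spruck, Lemma 1.2): if the leading
`(n)×(n)` block of a symmetric `(n+1)×(n+1)` matrix `M` satisfies
`(c₁/2)·I ≤ block ≤ C·I`, the mixed entries `|M_{αn}| ≤ C'`, and `M_{nn} ≥ R` with `R`
sufficiently large, then after ordering the eigenvalues satisfy `λ_α ∈ [c₁/4, 2C]`
for `α ≤ n−1` and `λ_n ≥ R/2`. -/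
theorem stmt_16 (n : ℕ) (c₁ C C' : ℝ) (hc₁ : 0 < c₁) (hC : 0 < C) (hC' : 0 ≤ C') :
    ∃ R₀ : ℝ, ∀ R : ℝ, R₀ ≤ R →
      ∀ (M : Matrix (Fin (n + 1)) (Fin (n + 1)) ℝ) (hM : M.IsHermitian),
        ((Matrix.of fun α β : Fin n => M α.castSucc β.castSucc)
            - (c₁ / 2) • (1 : Matrix (Fin n) (Fin n) ℝ)).PosSemidef →
        (C • (1 : Matrix (Fin n) (Fin n) ℝ)
            - Matrix.of fun α β : Fin n => M α.castSucc β.castSucc).PosSemidef →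
        (∀ α : Fin n, |M α.castSucc (Fin.last n)| ≤ C') →
        R ≤ M (Fin.last n) (Fin.last n) →
        ∃ σ : Equiv.Perm (Fin (n + 1)),
          (∀ α : Fin n, hM.eigenvalues (σ α.castSucc) ∈ Set.Icc (c₁ / 4) (2 * C)) ∧
          R / 2 ≤ hM.eigenvalues (σ (Fin.last n)) := by
  refine ⟨1 + c₁ + 4 * (n : ℝ) * C' ^ 2 / c₁ + (n : ℝ) * C + 2 * C * ((n : ℝ) + 1), ?_⟩
  intro R hR M hM h1 h2 hu hm
  have hpos1 : (0:ℝ) ≤ 4 * (n : ℝ) * C' ^ 2 / c₁ := by positivity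
  have hpos2 : (0:ℝ) ≤ (n : ℝ) * C := by positivity
  have hpos3 : (0:ℝ) ≤ 2 * C * ((n : ℝ) + 1) := by positivity
  have hRd : c₁ / 4 + 4 * (n : ℝ) * C' ^ 2 / c₁ < R := by linarith
  have hR0 : (0:ℝ) < R := by linarith
  set m := M (Fin.last n) (Fin.last n) with hmdef
  have key : ∀ i, hM.eigenvalues i ∈ Set.Icc (c₁ / 4) (2 * C) ∨ m ≤ hM.eigenvalues i :=
    eig_dichotomy n c₁ C C' R hc₁ hC hC' hRd M hM h1 h2 hu hm
  have hposeig : ∀ i, 0 ≤ hM.eigenvalues i := by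
    intro i
    rcases key i with h | h
    · linarith [h.1]
    · linarith
  have htr : M.trace = ∑ i, hM.eigenvalues i := trace_eq_sum_eigs' M hM
  have htrdiag : M.trace = (∑ α : Fin n, M α.castSucc α.castSucc) + m := by
    rw [Matrix.trace]
    simp only [Matrix.diag]
    rw [Fin.sum_univ_castSucc]
  have hdiagU : ∀ α : Fin n, M α.castSucc α.castSucc ≤ C := by
    intro α
    have h := quad_upper' _ C h2 (Pi.single α 1)
    have hxx : (Pi.single α 1 : Fin n → ℝ) ⬝ᵥ (Pi.single α 1) = 1 := by
      simp [dotProduct, Pi.single_apply]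
    have hq : (Pi.single α 1 : Fin n → ℝ) ⬝ᵥ
        ((Matrix.of fun α β : Fin n => M α.castSucc β.castSucc) *ᵥ Pi.single α 1) =
        M α.castSucc α.castSucc := by
      simp [dotProduct, Matrix.mulVec, Pi.single_apply]
    rw [hxx, hq] at h
    linarith
  have hdiagL : ∀ α : Fin n, c₁ / 2 ≤ M α.castSucc α.castSucc := by
    intro α
    have h := quad_lower' _ (c₁ / 2) h1 (Pi.single α 1)
    have hxx : (Pi.single α 1 : Fin n → ℝ) ⬝ᵥ (Pi.single α 1) = 1 := by
      simp [dotProduct, Pi.single_apply]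
    have hq : (Pi.single α 1 : Fin n → ℝ) ⬝ᵥ
        ((Matrix.of fun α β : Fin n => M α.castSucc β.castSucc) *ᵥ Pi.single α 1) =
        M α.castSucc α.castSucc := by
      simp [dotProduct, Matrix.mulVec, Pi.single_apply]
    rw [hxx, hq] at h
    linarith
  have hub : M.trace ≤ (n : ℝ) * C + m := by
    rw [htrdiag]
    have : (∑ α : Fin n, M α.castSucc α.castSucc) ≤ ∑ _α : Fin n, C :=
      Finset.sum_le_sum fun α _ => hdiagU α
    have h2' : (∑ _α : Fin n, (C:ℝ)) = (n : ℝ) * C := by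
      simp [Finset.sum_const, Finset.card_univ, nsmul_eq_mul]
    linarith
  have hlb : m ≤ M.trace := by
    rw [htrdiag]
    have : (0:ℝ) ≤ ∑ α : Fin n, M α.castSucc α.castSucc :=
      Finset.sum_nonneg fun α _ => by linarith [hdiagL α]
    linarith
  -- existence of a large eigenvalue
  have hex : ∃ i, m ≤ hM.eigenvalues i := by
    by_contra h
    push_neg at h
    have hall : ∀ i, hM.eigenvalues i ≤ 2 * C := fun i =>
      ((key i).resolve_right (not_le.mpr (h i))).2
    have hsum : (∑ i, hM.eigenvalues i) ≤ ∑ _i : Fin (n + 1), 2 * C :=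
      Finset.sum_le_sum fun i _ => hall i
    have hconst : (∑ _i : Fin (n + 1), (2 * C : ℝ)) = ((n : ℝ) + 1) * (2 * C) := by
      rw [Finset.sum_const, Finset.card_univ, Fintype.card_fin, nsmul_eq_mul]
      push_cast
      ring
    have : m ≤ ((n : ℝ) + 1) * (2 * C) := by
      rw [← hconst]
      calc m ≤ M.trace := hlb
        _ = ∑ i, hM.eigenvalues i := htr
        _ ≤ _ := hsum
    have hm' : R ≤ m := hm
    nlinarith
  obtain ⟨i₀, hi₀⟩ := hex
  -- uniqueness
  have huniq : ∀ j, j ≠ i₀ → hM.eigenvalues j ∈ Set.Icc (c₁ / 4) (2 * C) := by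
    intro j hj
    rcases key j with h | h
    · exact h
    · exfalso
      have hpair : hM.eigenvalues i₀ + hM.eigenvalues j ≤ ∑ i, hM.eigenvalues i := by
        have hsub : ({i₀, j} : Finset (Fin (n + 1))) ⊆ Finset.univ := Finset.subset_univ _
        have := Finset.sum_le_sum_of_subset_of_nonneg hsub
          (fun i _ _ => hposeig i)
        rwa [Finset.sum_pair (Ne.symm hj)] at this
      have h2m : 2 * m ≤ M.trace := by
        rw [htr]
        linarith
      have hm' : R ≤ m := hm
      nlinarith
  refine ⟨Equiv.swap i₀ (Fin.last n), ?_, ?_⟩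
  · intro α
    have hjlast : α.castSucc ≠ Fin.last n := (Fin.castSucc_lt_last α).ne
    by_cases hji : α.castSucc = i₀
    · rw [hji, Equiv.swap_apply_left]
      refine huniq _ ?_
      intro hlasteq
      exact hjlast (hji.trans hlasteq.symm)
    · rw [Equiv.swap_apply_of_ne_of_ne hji hjlast]
      exact huniq _ hji
  · rw [Equiv.swap_apply_right]
    have hm' : R ≤ m := hm
    linarith
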